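/- Let G be an N×N Hermitian complex matrix (N ≥ 1). Let {λ_n}_{n=1}^N be the eigenvalues of G counted with multiplicity and listed in nonincreasing order, and let {μ_n}_{n=1}^N be the (necessarily real) diagonal entries of G listed in nonincreasing order. Then {λ_n}_{n=1}^N majorizes {μ_n}_{n=1}^N. -/

import Mathlib

open Matrix in
private lemma schur_diag_entry {N : ℕ} (G : Matrix (Fin N) (Fin N) ℂ) (hG : G.IsHermitian)
    (j : Fin N) :
    (G j j).re = ∑ m, hG.eigenvalues m *
      Complex.normSq ((hG.eigenvectorUnitary : Matrix (Fin N) (Fin N) ℂ) j m) := by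
  set U : Matrix (Fin N) (Fin N) ℂ := (hG.eigenvectorUnitary : Matrix (Fin N) (Fin N) ℂ) with hU
  have h1 : G j j = ∑ m, U j m * (hG.eigenvalues m : ℂ) * star (U j m) := by
    conv_lhs => rw [hG.spectral_theorem, Unitary.conjStarAlgAut_apply]
    rw [Matrix.mul_apply]
    refine Finset.sum_congr rfl fun m _ => ?_
    rw [Matrix.mul_diagonal]
    simp only [Matrix.star_apply]
    rw [hU]
    simp
  have h2 : G j j = ∑ m, ((hG.eigenvalues m * Complex.normSq (U j m) : ℝ) : ℂ) := by
    rw [h1]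
    refine Finset.sum_congr rfl fun m _ => ?_
    push_cast
    rw [mul_comm (U j m), mul_assoc, Complex.star_def, Complex.mul_conj]
  rw [h2, ← Complex.ofReal_sum, Complex.ofReal_re]

open Matrix in
private lemma schur_row_sum {N : ℕ} (G : Matrix (Fin N) (Fin N) ℂ) (hG : G.IsHermitian)
    (j : Fin N) :
    ∑ m, Complex.normSq ((hG.eigenvectorUnitary : Matrix (Fin N) (Fin N) ℂ) j m) = 1 := by
  set U : Matrix (Fin N) (Fin N) ℂ := (hG.eigenvectorUnitary : Matrix (Fin N) (Fin N) ℂ) with hU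
  have h : U * star U = 1 := Matrix.mem_unitaryGroup_iff.mp hG.eigenvectorUnitary.2
  have h2 := congrArg (fun M => M j j) h
  simp only [Matrix.mul_apply, Matrix.star_apply, Matrix.one_apply_eq] at h2
  have h3 : ∑ m, ((Complex.normSq (U j m) : ℝ) : ℂ) = 1 := by
    rw [← h2]; exact Finset.sum_congr rfl fun m _ => (Complex.mul_conj (U j m)).symm
  exact_mod_cast h3

open Matrix in
private lemma schur_col_sum {N : ℕ} (G : Matrix (Fin N) (Fin N) ℂ) (hG : G.IsHermitian)
    (m : Fin N) :
    ∑ j, Complex.normSq ((hG.eigenvectorUnitary : Matrix (Fin N) (Fin N) ℂ) j m) = 1 := by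
  set U : Matrix (Fin N) (Fin N) ℂ := (hG.eigenvectorUnitary : Matrix (Fin N) (Fin N) ℂ) with hU
  have h : star U * U = 1 := Matrix.mem_unitaryGroup_iff'.mp hG.eigenvectorUnitary.2
  have h2 := congrArg (fun M => M m m) h
  simp only [Matrix.mul_apply, Matrix.star_apply, Matrix.one_apply_eq] at h2
  have h3 : ∑ j, ((Complex.normSq (U j m) : ℝ) : ℂ) = 1 := by
    rw [← h2]; refine Finset.sum_congr rfl fun j _ => ?_
    rw [mul_comm]; exact (Complex.mul_conj (U j m)).symm
  exact_mod_cast h3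

private lemma schur_card_lt {N k : ℕ} (hk : k < N) :
    (Finset.univ.filter (fun i : Fin N => (i : ℕ) < k)).card = k := by
  have : Finset.univ.filter (fun i : Fin N => (i : ℕ) < k) = Finset.Iio (⟨k, hk⟩ : Fin N) := by
    ext i
    simp [Fin.lt_def]
  rw [this, Fin.card_Iio]

private lemma schur_thresh {N k : ℕ} (hk : k < N) (lam d : Fin N → ℝ)
    (hanti : ∀ i j : Fin N, i ≤ j → lam j ≤ lam i)
    (hd0 : ∀ i, 0 ≤ d i) (hd1 : ∀ i, d i ≤ 1)
    (hsum : ∑ i, d i = k) :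
    ∑ i, lam i * d i ≤ ∑ i ∈ Finset.univ.filter (fun i : Fin N => (i : ℕ) < k), lam i := by
  set t : ℝ := lam ⟨k, hk⟩ with ht
  have key : ∀ i : Fin N, lam i * d i ≤
      (if (i : ℕ) < k then lam i - t + t * d i else t * d i) := by
    intro i
    by_cases h : (i : ℕ) < k
    · simp only [h, if_true]
      have h1 : t ≤ lam i := hanti i ⟨k, hk⟩ (by simp [Fin.le_def]; omega)
      nlinarith [hd1 i, hd0 i]
    · simp only [h, if_false]
      have h1 : lam i ≤ t := hanti ⟨k, hk⟩ i (by simp [Fin.le_def]; omega)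
      exact mul_le_mul_of_nonneg_right h1 (hd0 i)
  calc ∑ i, lam i * d i
      ≤ ∑ i : Fin N, (if (i : ℕ) < k then lam i - t + t * d i else t * d i) :=
        Finset.sum_le_sum fun i _ => key i
    _ = ∑ i ∈ Finset.univ.filter (fun i : Fin N => (i : ℕ) < k), lam i := by
        rw [Finset.sum_ite, Finset.sum_add_distrib, Finset.sum_sub_distrib, Finset.sum_const,
          schur_card_lt hk, nsmul_eq_mul]
        have h3 : (∑ i ∈ Finset.univ.filter (fun i : Fin N => (i : ℕ) < k), t * d i)
            + ∑ i ∈ Finset.univ.filter (fun i : Fin N => ¬ (i : ℕ) < k), t * d i = t * k := by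
          rw [Finset.sum_filter_add_sum_filter_not, ← Finset.mul_sum, hsum]
        linarith

/-- Schur: the spectrum of a Hermitian matrix, listed in
nonincreasing order, majorizes its diagonal entries listed in nonincreasing
order. -/
theorem schur_majorization {N : ℕ} (hN : 1 ≤ N)
    (G : Matrix (Fin N) (Fin N) ℂ) (hG : G.IsHermitian)
    (lam mu : Fin N → ℝ)
    (hlam_anti : ∀ i j : Fin N, i ≤ j → lam j ≤ lam i)
    (hmu_anti : ∀ i j : Fin N, i ≤ j → mu j ≤ mu i)
    (σ : Equiv.Perm (Fin N)) (hlam : ∀ i, lam i = hG.eigenvalues (σ i))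
    (τ : Equiv.Perm (Fin N)) (hmu : ∀ i, mu i = (G (τ i) (τ i)).re) :
    (∀ k : ℕ, 1 ≤ k → k < N →
      ∑ i ∈ Finset.univ.filter (fun i : Fin N => (i : ℕ) < k), mu i ≤
      ∑ i ∈ Finset.univ.filter (fun i : Fin N => (i : ℕ) < k), lam i) ∧
    ∑ i, lam i = ∑ i, mu i := by
  set U : Matrix (Fin N) (Fin N) ℂ := (hG.eigenvectorUnitary : Matrix (Fin N) (Fin N) ℂ) with hU
  set w : Fin N → Fin N → ℝ := fun j m => Complex.normSq (U j m) with hw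
  have hw0 : ∀ j m, 0 ≤ w j m := fun j m => Complex.normSq_nonneg _
  have hrow : ∀ j, ∑ m, w j m = 1 := fun j => schur_row_sum G hG j
  have hcol : ∀ m, ∑ j, w j m = 1 := fun m => schur_col_sum G hG m
  have hdiag : ∀ j, (G j j).re = ∑ m, hG.eigenvalues m * w j m :=
    fun j => schur_diag_entry G hG j
  constructor
  · intro k hk1 hk2
    set F := Finset.univ.filter (fun i : Fin N => (i : ℕ) < k) with hF
    set S := F.image τ with hS
    have hScard : S.card = k := by
      rw [hS, Finset.card_image_of_injective _ τ.injective, schur_card_lt hk2]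
    set d : Fin N → ℝ := fun i => ∑ j ∈ S, w j (σ i) with hd
    have hd0 : ∀ i, 0 ≤ d i := fun i => Finset.sum_nonneg fun j _ => hw0 j (σ i)
    have hd1 : ∀ i, d i ≤ 1 := by
      intro i
      calc d i ≤ ∑ j, w j (σ i) :=
            Finset.sum_le_sum_of_subset_of_nonneg (Finset.subset_univ S)
              (fun j _ _ => hw0 j (σ i))
        _ = 1 := hcol (σ i)
    have hdsum : ∑ i, d i = k := by
      calc ∑ i, d i = ∑ j ∈ S, ∑ i, w j (σ i) := Finset.sum_comm
        _ = ∑ j ∈ S, ∑ m, w j m :=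
            Finset.sum_congr rfl fun j _ => Equiv.sum_comp σ (fun m => w j m)
        _ = ∑ j ∈ S, 1 := Finset.sum_congr rfl fun j _ => hrow j
        _ = k := by rw [Finset.sum_const, hScard]; simp
    have hlhs : ∑ i ∈ F, mu i = ∑ i, lam i * d i := by
      calc ∑ i ∈ F, mu i = ∑ i ∈ F, (G (τ i) (τ i)).re :=
            Finset.sum_congr rfl fun i _ => hmu i
        _ = ∑ j ∈ S, (G j j).re :=
            (Finset.sum_image (f := fun j => (G j j).re) (fun x _ y _ h => τ.injective h)).symm
        _ = ∑ j ∈ S, ∑ m, hG.eigenvalues m * w j m :=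
            Finset.sum_congr rfl fun j _ => hdiag j
        _ = ∑ m, ∑ j ∈ S, hG.eigenvalues m * w j m := Finset.sum_comm
        _ = ∑ m, hG.eigenvalues m * ∑ j ∈ S, w j m := by
            refine Finset.sum_congr rfl fun m _ => ?_; rw [Finset.mul_sum]
        _ = ∑ i, hG.eigenvalues (σ i) * ∑ j ∈ S, w j (σ i) :=
            (Equiv.sum_comp σ (fun m => hG.eigenvalues m * ∑ j ∈ S, w j m)).symm
        _ = ∑ i, lam i * d i := Finset.sum_congr rfl fun i _ => by rw [hlam i]
    rw [hlhs]
    exact schur_thresh hk2 lam d hlam_anti hd0 hd1 hdsum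
  · calc ∑ i, lam i = ∑ i, hG.eigenvalues (σ i) := Finset.sum_congr rfl fun i _ => hlam i
      _ = ∑ m, hG.eigenvalues m := Equiv.sum_comp σ hG.eigenvalues
      _ = ∑ m, hG.eigenvalues m * ∑ j, w j m := by
          refine Finset.sum_congr rfl fun m _ => ?_; rw [hcol m, mul_one]
      _ = ∑ m, ∑ j, hG.eigenvalues m * w j m := by
          refine Finset.sum_congr rfl fun m _ => ?_; rw [Finset.mul_sum]
      _ = ∑ j, ∑ m, hG.eigenvalues m * w j m := Finset.sum_comm
      _ = ∑ j, (G j j).re := Finset.sum_congr rfl fun j _ => (hdiag j).symm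
      _ = ∑ i, (G (τ i) (τ i)).re := (Equiv.sum_comp τ (fun j => (G j j).re)).symm
      _ = ∑ i, mu i := Finset.sum_congr rfl fun i _ => (hmu i).symm
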